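/- Define F(ρ, φ) = (ρ cos φ, ρ sin φ, (1/3)(ρ² − 2)^{3/2}) for ρ > √2 and φ ∈ ℝ. Then for every such (ρ, φ) the partial derivatives of F satisfy, with respect to the Euclidean inner product ⟨·,·⟩ on ℝ³: ⟨∂F/∂ρ, ∂F/∂ρ⟩ = (ρ² − 1)², ⟨∂F/∂ρ, ∂F/∂φ⟩ = 0, and ⟨∂F/∂φ, ∂F/∂φ⟩ = ρ² (so F is an isometric immersion of the metric g₁₋ = (ρ²−1)² dρ² + ρ² dφ², restricted to ρ > √2, into Euclidean ℝ³). Moreover every point (X, Y, Z) in the image of F satisfies the algebraic equation (X² + Y² − 2)³ − 9Z² = 0. -/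

import Mathlib

/-- The Euclidean inner product on ℝ³. -/
def dot3 (u v : Fin 3 → ℝ) : ℝ := u 0 * v 0 + u 1 * v 1 + u 2 * v 2

/-- The embedding `F(ρ,φ) = (ρ cos φ, ρ sin φ, (1/3)(ρ²-2)^{3/2})` of the portion
`ρ > √2` of the surface `g₁₋ = (ρ²-1)² dρ² + ρ² dφ²` into ℝ³. -/
noncomputable def Fminus (ρ φ : ℝ) : Fin 3 → ℝ :=
  ![ρ * Real.cos φ, ρ * Real.sin φ, (1 / 3) * (ρ ^ 2 - 2) ^ ((3 : ℝ) / 2)]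

lemma sq_gt (ρ : ℝ) (h : Real.sqrt 2 < ρ) : 2 < ρ ^ 2 := by
  have h0 : (0:ℝ) ≤ Real.sqrt 2 := Real.sqrt_nonneg 2
  nlinarith [Real.sq_sqrt (by norm_num : (0:ℝ) ≤ 2)]

lemma deriv_r (ρ φ : ℝ) (h : Real.sqrt 2 < ρ) :
    HasDerivAt (fun r => Fminus r φ)
      ![Real.cos φ, Real.sin φ, ρ * (ρ ^ 2 - 2) ^ ((1:ℝ)/2)] ρ := by
  have hne : ρ ^ 2 - 2 ≠ 0 := by have := sq_gt ρ h; linarith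
  rw [hasDerivAt_pi]
  intro i
  fin_cases i
  · simpa [Fminus] using (hasDerivAt_id ρ).mul_const (Real.cos φ)
  · simpa [Fminus] using (hasDerivAt_id ρ).mul_const (Real.sin φ)
  · have h1 : HasDerivAt (fun r : ℝ => r ^ 2 - 2) (2 * ρ) ρ := by
      simpa using ((hasDerivAt_pow 2 ρ).sub_const 2)
    have h2 := (h1.rpow_const (p := (3:ℝ)/2) (Or.inl hne)).const_mul (1/3 : ℝ)
    have h2' : HasDerivAt (fun r : ℝ => (1/3 : ℝ) * (r ^ 2 - 2) ^ ((3:ℝ)/2))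
        (ρ * (ρ ^ 2 - 2) ^ ((1:ℝ)/2)) ρ := by
      convert h2 using 1
      · rfl
      · rfl
      rw [show (3:ℝ)/2 - 1 = 1/2 from by norm_num]
      ring
    simpa [Fminus] using h2'

lemma deriv_t (ρ φ : ℝ) :
    HasDerivAt (fun t => Fminus ρ t)
      ![-(ρ * Real.sin φ), ρ * Real.cos φ, 0] φ := by
  rw [hasDerivAt_pi]
  intro i
  fin_cases i
  · simpa [Fminus, mul_comm] using (Real.hasDerivAt_cos φ).const_mul ρ
  · simpa [Fminus, mul_comm] using (Real.hasDerivAt_sin φ).const_mul ρ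
  · simpa [Fminus] using hasDerivAt_const φ _

theorem stmt_16 :
    ∀ ρ φ : ℝ, Real.sqrt 2 < ρ →
      -- F is an isometric immersion of g₁₋ = (ρ²-1)² dρ² + ρ² dφ² for ρ > √2
      dot3 (deriv (fun r => Fminus r φ) ρ) (deriv (fun r => Fminus r φ) ρ)
          = (ρ ^ 2 - 1) ^ 2 ∧
      dot3 (deriv (fun r => Fminus r φ) ρ) (deriv (fun t => Fminus ρ t) φ) = 0 ∧
      dot3 (deriv (fun t => Fminus ρ t) φ) (deriv (fun t => Fminus ρ t) φ) = ρ ^ 2 ∧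
      -- every point (X,Y,Z) in the image of F satisfies (X²+Y²-2)³ - 9Z² = 0
      ((Fminus ρ φ 0) ^ 2 + (Fminus ρ φ 1) ^ 2 - 2) ^ 3 - 9 * (Fminus ρ φ 2) ^ 2 = 0 := by
  intro ρ φ h
  have hpos : (0:ℝ) ≤ ρ ^ 2 - 2 := by have := sq_gt ρ h; linarith
  have hr := (deriv_r ρ φ h).deriv
  have ht := (deriv_t ρ φ).deriv
  rw [hr, ht]
  have hhalf : ((ρ ^ 2 - 2) ^ ((1:ℝ)/2)) ^ 2 = ρ ^ 2 - 2 := by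
    rw [← Real.rpow_natCast ((ρ ^ 2 - 2) ^ ((1:ℝ)/2)) 2, ← Real.rpow_mul hpos]
    norm_num
  have h32 : ((ρ ^ 2 - 2) ^ ((3:ℝ)/2)) ^ 2 = (ρ ^ 2 - 2) ^ 3 := by
    rw [← Real.rpow_natCast ((ρ ^ 2 - 2) ^ ((3:ℝ)/2)) 2, ← Real.rpow_mul hpos]
    norm_num
  have hsc := Real.sin_sq_add_cos_sq φ
  refine ⟨?_, ?_, ?_, ?_⟩
  · simp only [dot3, Matrix.cons_val_zero, Matrix.cons_val_one, Matrix.head_cons,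
      Matrix.cons_val_two, Matrix.tail_cons]
    nlinarith [hhalf]
  · simp only [dot3, Matrix.cons_val_zero, Matrix.cons_val_one, Matrix.head_cons,
      Matrix.cons_val_two, Matrix.tail_cons]
    ring
  · simp only [dot3, Matrix.cons_val_zero, Matrix.cons_val_one, Matrix.head_cons,
      Matrix.cons_val_two, Matrix.tail_cons]
    nlinarith
  · simp only [Fminus, Matrix.cons_val_zero, Matrix.cons_val_one, Matrix.head_cons,
      Matrix.cons_val_two, Matrix.tail_cons]
    have hxy : (ρ * Real.cos φ) ^ 2 + (ρ * Real.sin φ) ^ 2 = ρ ^ 2 := by nlinarith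
    rw [hxy]
    nlinarith [h32]
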